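/- Conversely, if z* is the optimal solution of the Leader-Opt problem with |A_{z*}| > K, then z* satisfies the Slope Order condition (g'_j(z*_j) ≤ θ_{z*} for j ∈ A_{z*} and g'_ℓ(z*_ℓ) ≥ θ_{z*} for ℓ ∈ C_{z*}), the Structure Slope condition (g'_k(z*_k) = θ_{z*} for k ∈ B_{z*}), and the Sum condition (∑_i g_i(z*_i) = G). -/

import Mathlib

open Finset Filter Topology

/-- Sum of the `J - K` smallest coordinates of `z`: the infimum of sums over
`(J-K)`-element subsets of coordinates. -/
noncomputable def sumSmallest (J K : ℕ) (z : Fin J → ℝ) : ℝ :=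
  sInf {s : ℝ | ∃ S : Finset (Fin J), S.card = J - K ∧ s = ∑ i ∈ S, z i}

/-- Feasible stuffing vectors: nonnegative, total cost at most `G`. -/
def Feasible (J : ℕ) (g : Fin J → ℝ → ℝ) (G : ℝ) : Set (Fin J → ℝ) :=
  {z | (∀ j, 0 ≤ z j) ∧ ∑ j, g j (z j) ≤ G}

lemma ss_le (J K : ℕ) (w : Fin J → ℝ) (S : Finset (Fin J)) (hS : S.card = J - K) :
    sumSmallest J K w ≤ ∑ i ∈ S, w i := by
  apply csInf_le
  · apply Set.Finite.bddBelow
    apply (Set.finite_range (fun S : Finset (Fin J) => ∑ i ∈ S, w i)).subset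
    rintro s ⟨S, -, rfl⟩; exact ⟨S, rfl⟩
  · exact ⟨S, hS, rfl⟩

lemma ss_ge (J K : ℕ) (hK : K ≤ J) (w : Fin J → ℝ) (M : ℝ) (hM : ∀ j, w j ≤ M) :
    (∑ j, w j) - K * M ≤ sumSmallest J K w := by
  apply le_csInf
  · obtain ⟨S, -, hS⟩ := Finset.exists_subset_card_eq
      (show J - K ≤ (Finset.univ : Finset (Fin J)).card by simpa using Nat.sub_le J K)
    exact ⟨∑ i ∈ S, w i, S, hS, rfl⟩
  · rintro s ⟨S, hS, rfl⟩
    have hsplit : ∑ i ∈ S, w i + ∑ i ∈ Sᶜ, w i = ∑ j, w j := Finset.sum_add_sum_compl S w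
    have hcard : (Sᶜ.card : ℝ) = K := by
      have : Sᶜ.card = J - S.card := by simp [Finset.card_compl]
      rw [this, hS]; norm_cast; omega
    have hle : ∑ i ∈ Sᶜ, w i ≤ Sᶜ.card • M := Finset.sum_le_card_nsmul _ _ _ (fun x _ => hM x)
    rw [nsmul_eq_mul, hcard] at hle
    linarith

lemma ev_lt (b a : ℝ) (ha : 0 < a) : ∀ᶠ s in 𝓝[>] (0:ℝ), b * s < a := by
  have : Filter.Tendsto (fun s : ℝ => b * s) (𝓝 0) (𝓝 (b * 0)) :=
    (continuous_const.mul continuous_id).tendsto 0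
  rw [mul_zero] at this
  exact (this.eventually_lt_const ha).filter_mono nhdsWithin_le_nhds

lemma deriv_neg_ev (h : ℝ → ℝ) (d : ℝ) (hd : HasDerivAt h d 0) (hneg : d < 0) :
    ∀ᶠ s in 𝓝[>] (0:ℝ), h s < h 0 := by
  have hs : Filter.Tendsto (slope h 0) (𝓝[>] (0:ℝ)) (𝓝 d) :=
    ((hasDerivAt_iff_tendsto_slope.1 hd).mono_left
      (nhdsWithin_mono _ (fun x hx => ne_of_gt hx)))
  filter_upwards [hs.eventually_lt_const hneg, self_mem_nhdsWithin] with s h1 h2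
  have h2' : (0:ℝ) < s := h2
  have : (h s - h 0) / s < 0 := by simpa [slope_def_field, div_eq_iff] using h1
  rcases div_neg_iff.1 this with ⟨h3, h4⟩ | ⟨h3, h4⟩
  · linarith
  · linarith

lemma deriv_nonneg_of_strictMonoOn (g : ℝ → ℝ) (hdiff : Differentiable ℝ g)
    (hmono : StrictMonoOn g (Set.Ici 0)) (x : ℝ) (hx : 0 ≤ x) : 0 ≤ deriv g x := by
  have hd : HasDerivAt g (deriv g x) x := (hdiff x).hasDerivAt
  have hs : Filter.Tendsto (slope g x) (𝓝[>] x) (𝓝 (deriv g x)) :=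
    ((hasDerivAt_iff_tendsto_slope.1 hd).mono_left
      (nhdsWithin_mono _ (fun y hy => ne_of_gt hy)))
  refine ge_of_tendsto hs ?_
  filter_upwards [self_mem_nhdsWithin] with y hy
  have hy' : x < y := hy
  have : g x < g y := hmono hx (le_trans hx hy'.le) hy'
  have : 0 < (g y - g x) / (y - x) := div_pos (by linarith) (by linarith)
  simpa [slope_def_field] using this.le

lemma exists_gt_mul_lt (a b e : ℝ) (h : a * b < e) : ∃ x, a < x ∧ x * b < e := by
  have hc : Filter.Tendsto (fun x : ℝ => x * b) (𝓝 a) (𝓝 (a * b)) :=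
    (continuous_id.mul continuous_const).tendsto a
  have := (hc.eventually_lt_const h).filter_mono (nhdsWithin_le_nhds (s := Set.Ioi a))
  obtain ⟨x, hx1, hx2⟩ := (this.and self_mem_nhdsWithin).exists
  exact ⟨x, hx2, hx1⟩

lemma exists_lt_mul_gt (a b e : ℝ) (h : e < a * b) (ha : 0 < a) :
    ∃ x, 0 < x ∧ x < a ∧ e < x * b := by
  have hc : Filter.Tendsto (fun x : ℝ => x * b) (𝓝 a) (𝓝 (a * b)) :=
    (continuous_id.mul continuous_const).tendsto a
  have h1 := (hc.eventually_const_lt h).filter_mono (nhdsWithin_le_nhds (s := Set.Iio a))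
  have h2 : ∀ᶠ x in 𝓝[<] a, (0:ℝ) < x :=
    ((continuous_id.tendsto a).eventually_const_lt ha).filter_mono nhdsWithin_le_nhds
  obtain ⟨x, ⟨hx1, hx2⟩, hx3⟩ := ((h1.and h2).and self_mem_nhdsWithin).exists
  exact ⟨x, hx2, hx3, hx1⟩

set_option maxHeartbeats 1000000 in
theorem stmt7 (J K : ℕ) (g : Fin J → ℝ → ℝ) (G : ℝ)
    (hK0 : 0 < K) (hK : K < J) (hG : 0 < G)
    (hconv : ∀ j, StrictConvexOn ℝ (Set.Ici 0) (g j))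
    (hdiff : ∀ j, Differentiable ℝ (g j))
    (hmono : ∀ j, StrictMonoOn (g j) (Set.Ici (0 : ℝ)))
    (hzero : ∀ j, g j 0 = 0)
    (z : Fin J → ℝ)
    (A B C : Finset (Fin J)) (θ : ℝ)
    (hA : A = Finset.univ.filter fun i => ∀ j, z j ≤ z i)
    (hB : B = Finset.univ.filter fun i => 0 < z i ∧ ∃ j, z i < z j)
    (hC : C = Finset.univ.filter fun i => z i = 0)
    (hAK : K < A.card)
    (hθ : θ = (∑ j ∈ A, deriv (g j) (z j)) / ((A.card : ℝ) - K))
    (hfeas : z ∈ Feasible J g G)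
    (hmax : ∀ w ∈ Feasible J g G, sumSmallest J K w ≤ sumSmallest J K z) :
    (∀ j ∈ A, deriv (g j) (z j) ≤ θ) ∧
    (∀ j ∈ C, θ ≤ deriv (g j) (z j)) ∧
    (∀ j ∈ B, deriv (g j) (z j) = θ) ∧
    ∑ j, g j (z j) = G := by
  obtain ⟨hz0, hzG⟩ := hfeas
  set d : Fin J → ℝ := fun j => deriv (g j) (z j) with hd_def
  have hJpos : 0 < J := lt_trans hK0 hK
  haveI : Nonempty (Fin J) := Fin.pos_iff_nonempty.mp hJpos
  obtain ⟨a0, ha0⟩ := Finite.exists_max z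
  set m := z a0 with hm_def
  have hm : ∀ j, z j ≤ m := ha0
  have hmemA : ∀ j, j ∈ A ↔ z j = m := by
    intro j
    rw [hA]
    simp only [Finset.mem_filter, Finset.mem_univ, true_and]
    constructor
    · intro h; exact le_antisymm (hm j) (h a0)
    · intro h i; rw [h]; exact hm i
  have hzA : ∀ j ∈ A, z j = m := fun j hj => (hmemA j).1 hj
  have hlt : ∀ j, j ∉ A → z j < m :=
    fun j hj => lt_of_le_of_ne (hm j) (fun h => hj ((hmemA j).2 h))
  have hKJ : K ≤ J := hK.le
  have hApos : (0:ℝ) < (A.card : ℝ) - K := by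
    have : (K:ℝ) < A.card := by exact_mod_cast hAK
    linarith
  have hθ' : ∑ j ∈ A, d j = θ * ((A.card:ℝ) - K) := by
    rw [hθ]; field_simp
  have hdnn : ∀ j, 0 ≤ d j :=
    fun j => deriv_nonneg_of_strictMonoOn _ (hdiff j) (hmono j) _ (hz0 j)
  -- upper bound on sumSmallest z
  have hFz : sumSmallest J K z ≤ (∑ j, z j) - K * m := by
    obtain ⟨T, hTA, hTcard⟩ := Finset.exists_subset_card_eq hAK.le
    have h1 := ss_le J K z Tᶜ (by rw [Finset.card_compl, hTcard]; simp)
    have hT : ∑ i ∈ T, z i = (K:ℝ) * m := by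
      rw [Finset.sum_congr rfl (fun i hi => hzA i (hTA hi)), Finset.sum_const, hTcard,
        nsmul_eq_mul]
    have hsp : ∑ i ∈ T, z i + ∑ i ∈ Tᶜ, z i = ∑ j, z j := Finset.sum_add_sum_compl T z
    linarith
  -- Sum condition
  have hsum : ∑ j, g j (z j) = G := by
    by_contra hne
    have hlt' : ∑ j, g j (z j) < G := lt_of_le_of_ne hzG hne
    have hcont : Continuous fun s : ℝ => ∑ j, g j (z j + s) :=
      continuous_finset_sum _ fun j _ => (hdiff j).continuous.comp (continuous_const.add continuous_id)
    have hc0 : Filter.Tendsto (fun s : ℝ => ∑ j, g j (z j + s)) (𝓝 0)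
        (𝓝 (∑ j, g j (z j))) := by
      have := hcont.tendsto 0
      simpa using this
    have hev : ∀ᶠ s in 𝓝[>] (0:ℝ), (∑ j, g j (z j + s)) < G :=
      (hc0.eventually_lt_const hlt').filter_mono nhdsWithin_le_nhds
    obtain ⟨ε, hεG, hεpos⟩ := (hev.and self_mem_nhdsWithin).exists
    have hεpos' : (0:ℝ) < ε := hεpos
    have hwfeas : (fun j => z j + ε) ∈ Feasible J g G :=
      ⟨fun j => add_nonneg (hz0 j) hεpos'.le, hεG.le⟩
    have h1 := hmax _ hwfeas
    have h2 := ss_ge J K hKJ (fun j => z j + ε) (m + ε) (fun j => by show z j + ε ≤ m + ε; linarith [hm j])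
    have h3 : ∑ j, (z j + ε) = (∑ j, z j) + (J:ℝ) * ε := by
      rw [Finset.sum_add_distrib, Finset.sum_const, Finset.card_univ, Fintype.card_fin,
        nsmul_eq_mul]
    rw [h3] at h2
    have hJK : (K:ℝ) < J := by exact_mod_cast hK
    nlinarith
  -- z is not identically zero
  have hm0 : 0 < m := by
    by_contra hle
    push_neg at hle
    have hz' : ∀ j, z j = 0 := fun j => le_antisymm (le_trans (hm j) hle) (hz0 j)
    have : ∑ j, g j (z j) = 0 := by
      rw [Finset.sum_congr rfl fun j _ => by rw [hz' j, hzero j]]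
      simp
    rw [hsum] at this
    linarith
  -- generic perturbation
  have hgen : ∀ (c : Fin J → ℝ) (cM : ℝ),
      (∀ᶠ s in 𝓝[>] (0:ℝ), ∀ j, 0 ≤ z j + c j * s) →
      (∀ᶠ s in 𝓝[>] (0:ℝ), ∀ j, z j + c j * s ≤ m + cM * s) →
      (∑ j, d j * c j < 0) →
      ((K:ℝ) * cM < ∑ j, c j) → False := by
    intro c cM hev1 hev2 hbud hobj
    have hder : HasDerivAt (fun s => ∑ j, g j (z j + c j * s)) (∑ j, d j * c j) 0 := by
      apply HasDerivAt.fun_sum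
      intro j _
      have hinner : HasDerivAt (fun s : ℝ => z j + c j * s) (c j) 0 := by
        simpa using ((hasDerivAt_id (0:ℝ)).const_mul (c j)).const_add (z j)
      have houter : HasDerivAt (g j) (d j) (z j + c j * 0) := by
        rw [mul_zero, add_zero]
        exact ((hdiff j) (z j)).hasDerivAt
      exact houter.comp 0 hinner
    have hev3 := deriv_neg_ev _ _ hder hbud
    obtain ⟨s, ⟨⟨h1, h2⟩, h3⟩, hs⟩ := (((hev1.and hev2).and hev3).and self_mem_nhdsWithin).exists
    have hspos : (0:ℝ) < s := hs
    have h0 : (∑ j, g j (z j + c j * 0)) = G := by simpa using hsum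
    rw [h0] at h3
    have hwf : (fun j => z j + c j * s) ∈ Feasible J g G := ⟨h1, h3.le⟩
    have hle' := hmax _ hwf
    have hge := ss_ge J K hKJ _ (m + cM * s) h2
    have hsum' : ∑ j, (z j + c j * s) = (∑ j, z j) + (∑ j, c j) * s := by
      rw [Finset.sum_add_distrib, ← Finset.sum_mul]
    rw [hsum'] at hge
    nlinarith
  -- slope condition for coordinates below the max: derivative ≥ θ
  have claimL : ∀ k, z k < m → d k < θ → False := by
    intro k hkm hkθ
    have hkA : k ∉ A := fun h => absurd (hzA k h) (ne_of_lt hkm)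
    have hc0 : ((A.card:ℝ) - K) * d k < ∑ j ∈ A, d j := by
      have := mul_lt_mul_of_pos_left hkθ hApos
      rw [hθ'] ; nlinarith
    obtain ⟨cc, hcc1, hcc2⟩ := exists_gt_mul_lt _ _ _ hc0
    have hccpos : 0 < cc := lt_trans hApos hcc1
    set c : Fin J → ℝ := fun i => (if i = k then cc else 0) - (if i ∈ A then 1 else 0)
      with hc_def
    have e1 : ∑ i, d i * c i = cc * d k - ∑ i ∈ A, d i := by
      simp only [hc_def, mul_sub, Finset.sum_sub_distrib, mul_ite, mul_one, mul_zero]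
      rw [Finset.sum_ite_eq' Finset.univ k (fun i => d i * cc), Finset.sum_ite_mem,
        Finset.univ_inter]
      simp [mul_comm]
    have e2 : ∑ i, c i = cc - (A.card:ℝ) := by
      simp only [hc_def, Finset.sum_sub_distrib]
      rw [Finset.sum_ite_eq' Finset.univ k (fun _ => cc), Finset.sum_ite_mem,
        Finset.univ_inter]
      simp
    apply hgen c (-1)
    · -- nonnegativity
      filter_upwards [ev_lt 1 m hm0, self_mem_nhdsWithin] with s hs1 hs2
      intro j
      have hspos : (0:ℝ) < s := hs2
      by_cases hj : j ∈ A
      · have hjk : j ≠ k := fun h => hkA (h ▸ hj)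
        simp only [hc_def, hj, hjk, if_true, if_false]
        rw [hzA j hj]
        simp only [one_mul] at hs1
        nlinarith
      · by_cases hjk : j = k
        · subst hjk
          simp only [hc_def, hj, eq_self_iff_true, if_true, if_false]
          have := hz0 j
          nlinarith
        · simp only [hc_def, hj, hjk, if_true, if_false]
          simpa using hz0 j
    · -- upper bound m - s
      have hevk : ∀ᶠ s in 𝓝[>] (0:ℝ), (cc + 1) * s < m - z k :=
        ev_lt (cc + 1) (m - z k) (by linarith)
      have hevrest : ∀ᶠ s in 𝓝[>] (0:ℝ), ∀ j, j ∉ A → j ≠ k → 1 * s < m - z j := by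
        rw [Filter.eventually_all]
        intro j
        by_cases hj : j ∈ A
        · exact Filter.Eventually.of_forall fun s h => absurd hj h
        · have := ev_lt 1 (m - z j) (by linarith [hlt j hj])
          exact this.mono fun s h _ _ => h
      filter_upwards [hevk, hevrest, self_mem_nhdsWithin] with s hs1 hs2 hs3
      intro j
      have hspos : (0:ℝ) < s := hs3
      by_cases hj : j ∈ A
      · have hjk : j ≠ k := fun h => hkA (h ▸ hj)
        simp only [hc_def, hj, hjk, if_true, if_false]
        rw [hzA j hj]
        nlinarith
      · by_cases hjk : j = k
        · subst hjk
          simp only [hc_def, hj, eq_self_iff_true, if_true, if_false]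
          nlinarith
        · simp only [hc_def, hj, hjk, if_true, if_false]
          have := hs2 j hj hjk
          nlinarith
    · rw [e1]; linarith
    · rw [e2]
      have : (K:ℝ) < cc - ((A.card:ℝ) - K) + K := by linarith
      linarith
  -- structure slope upper bound for B
  have claimU : ∀ k ∈ B, d k ≤ θ := by
    intro k hk
    rw [hB] at hk
    simp only [Finset.mem_filter, Finset.mem_univ, true_and] at hk
    obtain ⟨hk0, j', hkj'⟩ := hk
    have hkm : z k < m := lt_of_lt_of_le hkj' (hm j')
    have hkA : k ∉ A := fun h => absurd (hzA k h) (ne_of_lt hkm)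
    by_contra hgt
    push_neg at hgt
    have hc0 : (∑ j ∈ A, d j) < ((A.card:ℝ) - K) * d k := by
      have := mul_lt_mul_of_pos_left hgt hApos
      rw [hθ']; nlinarith
    obtain ⟨cc, hccpos, hcclt, hcc2⟩ := exists_lt_mul_gt _ _ _ hc0 hApos
    set c : Fin J → ℝ := fun i => (if i ∈ A then 1 else 0) - (if i = k then cc else 0)
      with hc_def
    have e1 : ∑ i, d i * c i = (∑ i ∈ A, d i) - cc * d k := by
      simp only [hc_def, mul_sub, Finset.sum_sub_distrib, mul_ite, mul_one, mul_zero]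
      rw [Finset.sum_ite_eq' Finset.univ k (fun i => d i * cc), Finset.sum_ite_mem,
        Finset.univ_inter]
      simp [mul_comm]
    have e2 : ∑ i, c i = (A.card:ℝ) - cc := by
      simp only [hc_def, Finset.sum_sub_distrib]
      rw [Finset.sum_ite_eq' Finset.univ k (fun _ => cc), Finset.sum_ite_mem,
        Finset.univ_inter]
      simp
    apply hgen c 1
    · filter_upwards [ev_lt cc (z k) hk0, self_mem_nhdsWithin] with s hs1 hs2
      intro j
      have hspos : (0:ℝ) < s := hs2
      by_cases hj : j ∈ A
      · have hjk : j ≠ k := fun h => hkA (h ▸ hj)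
        simp only [hc_def, hj, hjk, if_true, if_false]
        have := hz0 j
        nlinarith
      · by_cases hjk : j = k
        · subst hjk
          simp only [hc_def, hj, eq_self_iff_true, if_true, if_false]
          nlinarith
        · simp only [hc_def, hj, hjk, if_true, if_false]
          simpa using hz0 j
    · filter_upwards [self_mem_nhdsWithin] with s hs
      intro j
      have hspos : (0:ℝ) < s := hs
      by_cases hj : j ∈ A
      · have hjk : j ≠ k := fun h => hkA (h ▸ hj)
        simp only [hc_def, hj, hjk, if_true, if_false]
        rw [hzA j hj]
        nlinarith
      · by_cases hjk : j = k
        · subst hjk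
          simp only [hc_def, hj, eq_self_iff_true, if_true, if_false]
          have := hm j
          nlinarith
        · simp only [hc_def, hj, hjk, if_true, if_false]
          have := hm j
          nlinarith
    · rw [e1]; linarith
    · rw [e2]; linarith
  -- slope condition for A
  have claimA : ∀ j ∈ A, d j ≤ θ := by
    intro j0 hj0
    by_contra hgt
    push_neg at hgt
    rcases Nat.lt_or_ge A.card (K + 2) with hcase | hcase
    · -- |A| = K + 1
      have hcard1 : A.card = K + 1 := by omega
      have hθeq : θ = ∑ i ∈ A, d i := by
        have h1 : ((K + 1 : ℕ) : ℝ) - (K : ℝ) = 1 := by push_cast; ring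
        rw [hθ, hcard1, h1, div_one]
      have hsplit : ∑ i ∈ A, d i = d j0 + ∑ i ∈ A.erase j0, d i :=
        (Finset.add_sum_erase A d hj0).symm
      have hnn : 0 ≤ ∑ i ∈ A.erase j0, d i :=
        Finset.sum_nonneg fun i _ => hdnn i
      rw [hθeq, hsplit] at hgt
      linarith
    · -- |A| ≥ K + 2
      have hc0pos : (0:ℝ) < (A.card:ℝ) - 1 - K := by
        have : (K:ℝ) + 2 ≤ (A.card:ℝ) := by exact_mod_cast hcase
        linarith
      have hsplit : ∑ i ∈ A, d i = d j0 + ∑ i ∈ A.erase j0, d i :=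
        (Finset.add_sum_erase A d hj0).symm
      have hkey : (∑ i ∈ A.erase j0, d i) < ((A.card:ℝ) - 1 - K) * d j0 := by
        nlinarith [hθ', hsplit, mul_lt_mul_of_pos_left hgt hApos]
      obtain ⟨cc, hccpos, hcclt, hcc2⟩ := exists_lt_mul_gt _ _ _ hkey hc0pos
      set c : Fin J → ℝ := fun i => (if i ∈ A.erase j0 then 1 else 0) -
        (if i = j0 then cc else 0) with hc_def
      have e1 : ∑ i, d i * c i = (∑ i ∈ A.erase j0, d i) - cc * d j0 := by
        simp only [hc_def, mul_sub, Finset.sum_sub_distrib, mul_ite, mul_one, mul_zero]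
        rw [Finset.sum_ite_eq' Finset.univ j0 (fun i => d i * cc), Finset.sum_ite_mem,
          Finset.univ_inter]
        simp [mul_comm]
      have e2 : ∑ i, c i = ((A.card:ℝ) - 1) - cc := by
        simp only [hc_def, Finset.sum_sub_distrib]
        rw [Finset.sum_ite_eq' Finset.univ j0 (fun _ => cc), Finset.sum_ite_mem,
          Finset.univ_inter]
        have : ((A.erase j0).card : ℝ) = (A.card:ℝ) - 1 := by
          rw [Finset.card_erase_of_mem hj0]
          have : 1 ≤ A.card := by omega
          push_cast [Nat.cast_sub this]
          ring
        simp [this]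
      apply hgen c 1
      · filter_upwards [ev_lt cc m hm0, self_mem_nhdsWithin] with s hs1 hs2
        intro j
        have hspos : (0:ℝ) < s := hs2
        by_cases hje : j ∈ A.erase j0
        · have hjj0 : j ≠ j0 := (Finset.mem_erase.1 hje).1
          simp only [hc_def, hje, hjj0, if_true, if_false]
          have := hz0 j
          nlinarith
        · by_cases hjj0 : j = j0
          · subst hjj0
            simp only [hc_def, hje, eq_self_iff_true, if_true, if_false]
            rw [hzA j hj0]
            nlinarith
          · simp only [hc_def, hje, hjj0, if_true, if_false]
            simpa using hz0 j
      · filter_upwards [self_mem_nhdsWithin] with s hs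
        intro j
        have hspos : (0:ℝ) < s := hs
        by_cases hje : j ∈ A.erase j0
        · have hjj0 : j ≠ j0 := (Finset.mem_erase.1 hje).1
          simp only [hc_def, hje, hjj0, if_true, if_false]
          have := hm j
          nlinarith
        · by_cases hjj0 : j = j0
          · subst hjj0
            simp only [hc_def, hje, eq_self_iff_true, if_true, if_false]
            have := hm j
            nlinarith
          · simp only [hc_def, hje, hjj0, if_true, if_false]
            have := hm j
            nlinarith
      · rw [e1]; linarith
      · rw [e2]
        have : (K:ℝ) * 1 = K := mul_one _
        rw [this]
        linarith
  refine ⟨claimA, ?_, ?_, hsum⟩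
  · intro k hk
    rw [hC] at hk
    simp only [Finset.mem_filter, Finset.mem_univ, true_and] at hk
    by_contra h
    push_neg at h
    exact claimL k (by rw [hk]; exact hm0) h
  · intro k hk
    refine le_antisymm (claimU k hk) ?_
    rw [hB] at hk
    simp only [Finset.mem_filter, Finset.mem_univ, true_and] at hk
    obtain ⟨hk0, j', hkj'⟩ := hk
    by_contra h
    push_neg at h
    exact claimL k (lt_of_lt_of_le hkj' (hm j')) h
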